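/- For n ≥ 2, the basic sequent 1^n, ⊗(⊥^n) (n occurrences of 1 together with an n-fold tensor of ⊥s) is inhabited by exactly n! proof nets (with jumps targeting 1-occurrences), and these n! proof nets are pairwise inequivalent: no rewiring step is possible from any of them. -/

import Mathlib

namespace MLL

/-- Formulas of unit-only MLL, with every connective and unit occurrence
carrying a name (a natural number). -/
inductive Formula : Type
  | one : ℕ → Formula
  | bot : ℕ → Formula
  | parr : ℕ → Formula → Formula → Formula
  | tens : ℕ → Formula → Formula → Formula
deriving DecidableEq

namespace Formula

/-- The name of the root connective/unit of a formula. -/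
def name : Formula → ℕ
  | one n => n
  | bot n => n
  | parr n _ _ => n
  | tens n _ _ => n

/-- All names occurring in a formula. -/
def names : Formula → Finset ℕ
  | one n => {n}
  | bot n => {n}
  | parr n A B => insert n (A.names ∪ B.names)
  | tens n A B => insert n (A.names ∪ B.names)

/-- All subformula occurrences of a formula. -/
def subs : Formula → List Formula
  | one n => [one n]
  | bot n => [bot n]
  | parr n A B => parr n A B :: (A.subs ++ B.subs)
  | tens n A B => tens n A B :: (A.subs ++ B.subs)

end Formula

/-- A sequent is a multiset of (named) formulas. -/
abbrev Sequent := Multiset Formula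

/-- The names occurring in a sequent. -/
def seqNames (Γ : Sequent) : Finset ℕ := (Γ.map Formula.names).sup

/-- The subformula occurrences of a sequent. -/
def seqSubs (Γ : Sequent) : Multiset Formula :=
  Γ.bind (fun A => (A.subs : Multiset Formula))

/-- `A` is a subformula occurrence of `Γ`. -/
def HasSub (Γ : Sequent) (A : Formula) : Prop := A ∈ seqSubs Γ

/-- `a` is the name of a `⊥`-occurrence of `Γ`. -/
def IsBotName (Γ : Sequent) (a : ℕ) : Prop := HasSub Γ (.bot a)

/-- `a` is the name of a `1`-occurrence of `Γ`. -/
def IsOneName (Γ : Sequent) (a : ℕ) : Prop := HasSub Γ (.one a)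

/-- The sequent is well-named: all occurrences carry pairwise distinct names. -/
def WellNamed (Γ : Sequent) : Prop := ((seqSubs Γ).map Formula.name).Nodup

/-- A linking: a function assigning to (the name of) each `⊥`-occurrence
a target name (the jump). -/
abbrev Linking := ℕ → ℕ

/-- A switching: a choice of left/right for each par occurrence. -/
abbrev Switching := ℕ → Bool

/-- The linking sends (names of) `⊥`-occurrences to names of `Γ`. -/
def ValidLinking (Γ : Sequent) (lk : Linking) : Prop :=
  ∀ a, IsBotName Γ a → lk a ∈ seqNames Γ

/-- The edges of the switching graph for `Γ`, `lk` and the switching `σ`. -/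
def switchAdj (Γ : Sequent) (lk : Linking) (σ : Switching) (x y : ℕ) : Prop :=
  (∃ A B, HasSub Γ (.tens x A B) ∧ (y = A.name ∨ y = B.name)) ∨
  (∃ A B, HasSub Γ (.parr x A B) ∧ y = (if σ x then A.name else B.name)) ∨
  (IsBotName Γ x ∧ y = lk x)

/-- The switching graph for `Γ`, `lk` and `σ`. -/
def switchGraph (Γ : Sequent) (lk : Linking) (σ : Switching) : SimpleGraph ℕ :=
  SimpleGraph.fromRel (switchAdj Γ lk σ)

/-- Correctness of a linking: every switching graph (restricted to the names of `Γ`)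
is acyclic and connected, i.e. a tree.  `(Γ, lk)` is a proof net iff `Correct Γ lk`. -/
def Correct (Γ : Sequent) (lk : Linking) : Prop :=
  ValidLinking Γ lk ∧
  ∀ σ : Switching, ((switchGraph Γ lk σ).induce {x : ℕ | x ∈ seqNames Γ}).IsTree

/-- All jumps of the linking target `1`-occurrences. -/
def TargetsOnes (Γ : Sequent) (lk : Linking) : Prop :=
  ∀ a, IsBotName Γ a → IsOneName Γ (lk a)

/-- Two correct linkings describe the same proof net (they agree on all jumps). -/
def SameNet (Γ : Sequent) (lk lk' : Linking) : Prop :=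
  Correct Γ lk ∧ Correct Γ lk' ∧ ∀ a, IsBotName Γ a → lk a = lk' a

/-- A rewiring step between proof nets: the target of exactly one jump is changed. -/
def Rewire (Γ : Sequent) (lk lk' : Linking) : Prop :=
  Correct Γ lk ∧ Correct Γ lk' ∧
  ∃ a, IsBotName Γ a ∧ lk a ≠ lk' a ∧ ∀ b, IsBotName Γ b → b ≠ a → lk b = lk' b

/-- Equivalence of proof nets over `Γ`: the equivalence relation generated by rewiring. -/
def NetEquiv (Γ : Sequent) : Linking → Linking → Prop :=
  Relation.EqvGen (fun lk lk' => SameNet Γ lk lk' ∨ Rewire Γ lk lk')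

end MLL

namespace MLL

/-- `TBots f a` is the `(a+1)`-fold tensor `⊗(⊥^(a+1))`, drawing names from the
supply `f`. -/
def TBots (f : ℕ → ℕ) : ℕ → Formula
  | 0 => .bot (f 0)
  | a + 1 => .tens (f 0) (.bot (f 1)) (TBots (fun x => f (x + 2)) a)

end MLL

namespace MLL

/-- The sequent `1^n, ⊗(⊥^n)`: `n` occurrences of `1` (named `0, …, n-1`)
together with an `n`-fold tensor of `⊥`s (named from `n` onwards). -/
def onesTensBots (n : ℕ) : Sequent :=
  (Multiset.range n).map Formula.one + {TBots (fun x => n + x) (n - 1)}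

end MLL

namespace MLL

lemma tbots_congr {u v k k' : ℕ} (h1 : u = v) (h2 : k = k') :
    TBots (fun y => u + y) k = TBots (fun y => v + y) k' := by
  subst h1; subst h2; rfl

lemma tbots_succ (c a : ℕ) :
    TBots (fun x => c + x) (a + 1) =
      .tens c (.bot (c+1)) (TBots (fun x => (c+2) + x) a) := by
  show Formula.tens (c+0) (.bot (c+1)) (TBots (fun x => c + (x+2)) a) = _
  have h2 : (fun x => c + (x+2)) = (fun x => (c+2) + x) := by funext x; omega
  rw [h2]
  rfl


lemma tbots_name (c a : ℕ) : (TBots (fun x => c + x) a).name = c := by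
  cases a <;> rfl

lemma tbots_subs_bot (a : ℕ) : ∀ (c b : ℕ),
    (Formula.bot b ∈ (TBots (fun x => c + x) a).subs ↔
      (∃ i < a, b = c + 2*i + 1) ∨ b = c + 2*a) := by
  induction a with
  | zero => intro c b; simp [TBots, Formula.subs]
  | succ a ih =>
    intro c b
    rw [tbots_succ]
    simp only [Formula.subs, List.mem_cons, List.mem_append]
    constructor
    · rintro (h | h | h)
      · cases h
      · simp only [Formula.subs, List.mem_cons, List.not_mem_nil, or_false] at h
        injection h with h
        exact Or.inl ⟨0, by omega, by omega⟩
      · rcases (ih (c+2) b).mp h with ⟨i, hi, hb⟩ | hb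
        · exact Or.inl ⟨i+1, by omega, by omega⟩
        · exact Or.inr (by omega)
    · rintro (⟨i, hi, hb⟩ | hb)
      · cases i with
        | zero =>
          refine Or.inr (Or.inl ?_)
          simp only [Formula.subs, List.mem_cons, List.not_mem_nil, or_false]
          congr 1; try omega
        | succ j =>
          exact Or.inr (Or.inr ((ih (c+2) b).mpr (Or.inl ⟨j, by omega, by omega⟩)))
      · exact Or.inr (Or.inr ((ih (c+2) b).mpr (Or.inr (by omega))))

lemma tbots_subs_one (a : ℕ) : ∀ (c b : ℕ),
    Formula.one b ∉ (TBots (fun x => c + x) a).subs := by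
  induction a with
  | zero => intro c b h; simp [TBots, Formula.subs] at h
  | succ a ih =>
    intro c b h
    rw [tbots_succ] at h
    simp only [Formula.subs, List.mem_cons, List.mem_append] at h
    rcases h with h | h | h
    · cases h
    · simp only [Formula.subs, List.mem_cons, List.not_mem_nil, or_false] at h
      cases h
    · exact ih (c+2) b h

lemma tbots_subs_parr (a : ℕ) : ∀ (c x : ℕ) (A B : Formula),
    Formula.parr x A B ∉ (TBots (fun x => c + x) a).subs := by
  induction a with
  | zero => intro c x A B h; simp [TBots, Formula.subs] at h
  | succ a ih =>
    intro c x A B h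
    rw [tbots_succ] at h
    simp only [Formula.subs, List.mem_cons, List.mem_append] at h
    rcases h with h | h | h
    · cases h
    · simp only [Formula.subs, List.mem_cons, List.not_mem_nil, or_false] at h
      cases h
    · exact ih (c+2) x A B h

lemma tbots_subs_tens (a : ℕ) : ∀ (c x : ℕ) (A B : Formula),
    (Formula.tens x A B ∈ (TBots (fun x => c + x) a).subs ↔
      ∃ i < a, x = c + 2*i ∧ A = .bot (c + 2*i + 1) ∧
        B = TBots (fun y => (c + 2*i + 2) + y) (a - i - 1)) := by
  induction a with
  | zero => intro c x A B; simp [TBots, Formula.subs]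
  | succ a ih =>
    intro c x A B
    rw [tbots_succ]
    simp only [Formula.subs, List.mem_cons, List.mem_append]
    constructor
    · rintro (h | h | h)
      · injection h with h1 h2 h3
        refine ⟨0, by omega, by omega, by rw [h2]; try rfl; try (congr 1; omega), ?_⟩
        rw [h3]
        exact (tbots_congr (by omega) (by omega)).symm
      · simp only [Formula.subs, List.mem_cons, List.not_mem_nil, or_false] at h
        cases h
      · rcases (ih (c+2) x A B).mp h with ⟨i, hi, hx, hA, hB⟩
        refine ⟨i+1, by omega, by omega, by rw [hA]; congr 1; omega, ?_⟩
        rw [hB]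
        exact tbots_congr (by omega) (by omega)
    · rintro ⟨i, hi, hx, hA, hB⟩
      cases i with
      | zero =>
        refine Or.inl ?_
        rw [hx, hA, hB]
        rfl
      | succ j =>
        refine Or.inr (Or.inr ((ih (c+2) x A B).mpr ⟨j, by omega, by omega, ?_, ?_⟩))
        · rw [hA]; congr 1; omega
        · rw [hB]; exact tbots_congr (by omega) (by omega)

lemma tbots_names (a : ℕ) : ∀ (c : ℕ),
    (TBots (fun x => c + x) a).names = Finset.Icc c (c + 2*a) := by
  induction a with
  | zero => intro c; simp [TBots, Formula.names]
  | succ a ih =>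
    intro c
    rw [tbots_succ]
    show insert c ((Formula.bot (c+1)).names ∪ _) = _
    rw [ih (c+2)]
    show insert c ({c+1} ∪ _) = _
    ext y
    simp only [Finset.mem_Icc, Finset.mem_insert, Finset.mem_union, Finset.mem_singleton]
    omega

end MLL
namespace MLL

variable {n : ℕ}

/-- The `⊥`-names of `onesTensBots n`, arithmetically. -/
def BotP (n b : ℕ) : Prop := (∃ i < n - 1, b = n + 2*i + 1) ∨ b = 3*n - 2

instance : ∀ n b, Decidable (BotP n b) := fun n b => by
  unfold BotP; infer_instance

lemma mem_msup {m : Multiset (Finset ℕ)} {b : ℕ} : b ∈ m.sup ↔ ∃ s ∈ m, b ∈ s := by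
  induction m using Multiset.induction with
  | empty => simp
  | cons a m ih => simp [Multiset.sup_cons, ih]

lemma mem_onesTensBots {F : Formula} (hn : 2 ≤ n) :
    F ∈ onesTensBots n ↔ (∃ i < n, F = .one i) ∨ F = TBots (fun x => n + x) (n-1) := by
  unfold onesTensBots
  simp only [Multiset.mem_add, Multiset.mem_map, Multiset.mem_range, Multiset.mem_singleton]
  constructor
  · rintro (⟨i, hi, rfl⟩ | h)
    · exact Or.inl ⟨i, hi, rfl⟩
    · exact Or.inr h
  · rintro (⟨i, hi, rfl⟩ | h)
    · exact Or.inl ⟨i, hi, rfl⟩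
    · exact Or.inr h

lemma hasSub_iff {A : Formula} (hn : 2 ≤ n) :
    HasSub (onesTensBots n) A ↔
      (∃ i < n, A = .one i) ∨ A ∈ (TBots (fun x => n + x) (n-1)).subs := by
  unfold HasSub seqSubs
  rw [Multiset.mem_bind]
  constructor
  · rintro ⟨F, hF, hA⟩
    rcases (mem_onesTensBots hn).mp hF with ⟨i, hi, rfl⟩ | rfl
    · simp only [Formula.subs, Multiset.mem_coe, List.mem_singleton] at hA
      exact Or.inl ⟨i, hi, hA⟩
    · exact Or.inr hA
  · rintro (⟨i, hi, rfl⟩ | h)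
    · exact ⟨.one i, (mem_onesTensBots hn).mpr (Or.inl ⟨i, hi, rfl⟩), by
        simp [Formula.subs]⟩
    · exact ⟨_, (mem_onesTensBots hn).mpr (Or.inr rfl), h⟩

lemma isBotName_iff {b : ℕ} (hn : 2 ≤ n) : IsBotName (onesTensBots n) b ↔ BotP n b := by
  unfold IsBotName BotP
  rw [hasSub_iff hn, tbots_subs_bot]
  constructor
  · rintro (⟨i, _, h⟩ | h | h)
    · cases h
    · exact Or.inl h
    · right; omega
  · rintro (h | h)
    · exact Or.inr (Or.inl h)
    · exact Or.inr (Or.inr (by omega))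

lemma isOneName_iff {b : ℕ} (hn : 2 ≤ n) : IsOneName (onesTensBots n) b ↔ b < n := by
  unfold IsOneName
  rw [hasSub_iff hn]
  constructor
  · rintro (⟨i, hi, h⟩ | h)
    · injection h with h; omega
    · exact absurd h (tbots_subs_one _ _ _)
  · intro h; exact Or.inl ⟨b, h, rfl⟩

lemma hasSub_tens_iff {x : ℕ} {A B : Formula} (hn : 2 ≤ n) :
    HasSub (onesTensBots n) (.tens x A B) ↔
      ∃ i < n - 1, x = n + 2*i ∧ A = .bot (n + 2*i + 1) ∧
        B = TBots (fun y => (n + 2*i + 2) + y) (n - 1 - i - 1) := by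
  rw [hasSub_iff hn, tbots_subs_tens]
  constructor
  · rintro (⟨i, _, h⟩ | h)
    · cases h
    · exact h
  · exact Or.inr

lemma not_hasSub_parr {x : ℕ} {A B : Formula} (hn : 2 ≤ n) :
    ¬ HasSub (onesTensBots n) (.parr x A B) := by
  rw [hasSub_iff hn]
  rintro (⟨i, _, h⟩ | h)
  · cases h
  · exact tbots_subs_parr _ _ _ _ _ h

lemma seqNames_eq (hn : 2 ≤ n) :
    seqNames (onesTensBots n) = Finset.range (3*n - 1) := by
  ext b
  unfold seqNames
  rw [mem_msup]
  constructor
  · rintro ⟨s, hs, hb⟩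
    rw [Multiset.mem_map] at hs
    obtain ⟨F, hF, rfl⟩ := hs
    rcases (mem_onesTensBots hn).mp hF with ⟨i, hi, rfl⟩ | rfl
    · simp only [Formula.names, Finset.mem_singleton] at hb
      subst hb
      exact Finset.mem_range.mpr (by omega)
    · rw [tbots_names] at hb
      rw [Finset.mem_Icc] at hb
      exact Finset.mem_range.mpr (by omega)
  · intro hb
    rw [Finset.mem_range] at hb
    by_cases h : b < n
    · refine ⟨(Formula.one b).names, ?_, by simp [Formula.names]⟩
      exact Multiset.mem_map_of_mem _ ((mem_onesTensBots hn).mpr (Or.inl ⟨b, h, rfl⟩))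
    · refine ⟨(TBots (fun x => n + x) (n-1)).names, ?_, ?_⟩
      · exact Multiset.mem_map_of_mem _ ((mem_onesTensBots hn).mpr (Or.inr rfl))
      · rw [tbots_names, Finset.mem_Icc]; omega

end MLL
namespace MLL

/-! ### General acyclicity criterion -/

lemma last_edge {V : Type*} {G : SimpleGraph V} :
    ∀ {v u : V} (q : G.Walk v u), v ≠ u → ∃ x, s(x, u) ∈ q.edges := by
  intro v u q
  induction q with
  | nil => intro h; exact absurd rfl h
  | @cons a b c h' q' ih =>
    intro _
    by_cases hbc : b = c
    · subst hbc; exact ⟨a, by simp⟩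
    · obtain ⟨x, hx⟩ := ih hbc
      exact ⟨x, by simp [hx]⟩

lemma acyclic_of_parent {V : Type*} (G : SimpleGraph V) (f : V → ℕ) (p : V → V)
    (h : ∀ x y, G.Adj x y → (y = p x ∧ f y < f x) ∨ (x = p y ∧ f x < f y)) :
    G.IsAcyclic := by
  classical
  intro u c hc
  have hne : c.support.toFinset.Nonempty := ⟨u, by simp [SimpleGraph.Walk.start_mem_support]⟩
  obtain ⟨m, hm, hmax⟩ := Finset.exists_max_image c.support.toFinset f hne
  rw [List.mem_toFinset] at hm
  have hmax' : ∀ y ∈ c.support, f y ≤ f m := fun y hy => hmax y (List.mem_toFinset.mpr hy)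
  have hc' := hc.rotate hm
  set c' := c.rotate m hm with hcdef
  have hsupp : ∀ y ∈ c'.support, f y ≤ f m := by
    intro y hy
    rcases (SimpleGraph.Walk.mem_support_iff _).mp hy with h1 | h2
    · subst h1; exact le_rfl
    · exact hmax' y (List.mem_of_mem_tail ((c.support_rotate m hm).mem_iff.mp h2))
  clear_value c'
  cases c' with
  | nil => exact hc'.ne_nil rfl
  | @cons _ v _ hadj q =>
    have hvm : v ≠ m := fun e => by subst e; exact G.irrefl hadj
    obtain ⟨x, hx⟩ := last_edge q hvm
    have hxadj : G.Adj x m := (SimpleGraph.Walk.adj_of_mem_edges q hx)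
    have hxs : x ∈ q.support := q.fst_mem_support_of_mem_edges hx
    have hvsupp : f v ≤ f m := hsupp v (by simp)
    have hxsupp : f x ≤ f m := hsupp x (by simp [hxs])
    have hv : v = p m := by
      rcases h m v hadj with ⟨e, _⟩ | ⟨_, hlt⟩
      · exact e
      · omega
    have hxp : x = p m := by
      rcases h x m hxadj with ⟨e, hlt⟩ | ⟨e, _⟩
      · omega
      · exact e
    have hxv : x = v := by rw [hv, hxp]
    subst hxv
    have hnodup := hc'.edges_nodup
    rw [SimpleGraph.Walk.edges_cons] at hnodup
    rw [Sym2.eq_swap] at hx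
    exact (List.nodup_cons.mp hnodup).1 hx

lemma induce_acyclic {V : Type*} {G : SimpleGraph V} (h : G.IsAcyclic) (s : Set V) :
    (G.induce s).IsAcyclic := by
  intro u c hc
  exact h (c.map (SimpleGraph.Embedding.induce (G := G) s).toHom)
    (hc.map (SimpleGraph.Embedding.induce (G := G) s).injective)

/-! ### The graph of `onesTensBots n` -/

variable {n : ℕ} {lk : Linking} {σ : Switching}

/-- The "one-directional" edge relation of the switching graph. -/
def R (n : ℕ) (lk : Linking) (x y : ℕ) : Prop :=
  (∃ i < n - 1, x = n + 2*i ∧ (y = x + 1 ∨ y = x + 2)) ∨ (BotP n x ∧ y = lk x)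

lemma botP_bounds {b : ℕ} (hn : 2 ≤ n) (h : BotP n b) : n + 1 ≤ b ∧ b ≤ 3*n - 2 := by
  rcases h with ⟨i, hi, rfl⟩ | rfl <;> omega

lemma switchAdj_iff {x y : ℕ} (hn : 2 ≤ n) :
    switchAdj (onesTensBots n) lk σ x y ↔ R n lk x y := by
  unfold switchAdj R
  constructor
  · rintro (⟨A, B, hAB, hy⟩ | ⟨A, B, hAB, hy⟩ | ⟨hb, hy⟩)
    · rw [hasSub_tens_iff hn] at hAB
      obtain ⟨i, hi, hx, hA, hB⟩ := hAB
      refine Or.inl ⟨i, hi, hx, ?_⟩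
      rcases hy with rfl | rfl
      · left; rw [hA]; simp [Formula.name]; omega
      · right; rw [hB, tbots_name]; omega
    · exact absurd hAB (not_hasSub_parr hn)
    · exact Or.inr ⟨(isBotName_iff hn).mp hb, hy⟩
  · rintro (⟨i, hi, hx, hy⟩ | ⟨hb, hy⟩)
    · refine Or.inl ⟨.bot (n + 2*i + 1), TBots (fun z => (n + 2*i + 2) + z) (n - 1 - i - 1),
        (hasSub_tens_iff hn).mpr ⟨i, hi, hx, rfl, rfl⟩, ?_⟩
      rcases hy with rfl | rfl
      · left; simp [Formula.name]; omega
      · right; rw [tbots_name]; omega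
    · exact Or.inr (Or.inr ⟨(isBotName_iff hn).mpr hb, hy⟩)

lemma adj_iff {x y : ℕ} (hn : 2 ≤ n) :
    (switchGraph (onesTensBots n) lk σ).Adj x y ↔ x ≠ y ∧ (R n lk x y ∨ R n lk y x) := by
  unfold switchGraph
  rw [SimpleGraph.fromRel_adj, switchAdj_iff hn, switchAdj_iff hn]

/-- A good linking: maps the `⊥`-names injectively into the `1`-names. -/
def Good (n : ℕ) (lk : Linking) : Prop :=
  (∀ b, BotP n b → lk b < n) ∧ Set.InjOn lk {b | BotP n b}

/-- The finset of `⊥`-names. -/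
def BotFin (n : ℕ) : Finset ℕ :=
  ((Finset.range (n-1)).image (fun i => n + 2*i + 1)) ∪ {3*n - 2}

lemma mem_botFin {b : ℕ} : b ∈ BotFin n ↔ BotP n b := by
  unfold BotFin BotP
  simp only [Finset.mem_union, Finset.mem_image, Finset.mem_range, Finset.mem_singleton]
  constructor
  · rintro (⟨i, hi, rfl⟩ | rfl)
    · exact Or.inl ⟨i, hi, rfl⟩
    · exact Or.inr rfl
  · rintro (⟨i, hi, rfl⟩ | rfl)
    · exact Or.inl ⟨i, hi, rfl⟩
    · exact Or.inr rfl

lemma card_botFin (hn : 2 ≤ n) : (BotFin n).card = n := by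
  unfold BotFin
  rw [Finset.card_union_of_disjoint, Finset.card_image_of_injOn, Finset.card_range,
    Finset.card_singleton]
  · omega
  · intro a _ b _ hab; dsimp only at hab; omega
  · simp only [Finset.disjoint_singleton_right, Finset.mem_image, Finset.mem_range]
    rintro ⟨i, hi, h⟩; omega

lemma good_surj (hn : 2 ≤ n) (hg : Good n lk) {j : ℕ} (hj : j < n) :
    ∃ b, BotP n b ∧ lk b = j := by
  have hinj : Set.InjOn lk ↑(BotFin n) := by
    intro a ha b hb
    exact hg.2 (mem_botFin.mp (by exact_mod_cast ha)) (mem_botFin.mp (by exact_mod_cast hb))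
  have hcard : ((BotFin n).image lk).card = n := by
    rw [Finset.card_image_of_injOn hinj, card_botFin hn]
  have hsub : (BotFin n).image lk ⊆ Finset.range n := by
    intro y hy
    rw [Finset.mem_image] at hy
    obtain ⟨b, hb, rfl⟩ := hy
    exact Finset.mem_range.mpr (hg.1 b (mem_botFin.mp hb))
  have := Finset.eq_of_subset_of_card_le hsub (by rw [hcard, Finset.card_range])
  have hj' : j ∈ (BotFin n).image lk := this ▸ Finset.mem_range.mpr hj
  rw [Finset.mem_image] at hj'
  obtain ⟨b, hb, hbj⟩ := hj'
  exact ⟨b, mem_botFin.mp hb, hbj⟩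

lemma good_acyclic (hn : 2 ≤ n) (hg : Good n lk) (σ : Switching) :
    (switchGraph (onesTensBots n) lk σ).IsAcyclic := by
  classical
  apply acyclic_of_parent _ (fun v => if v < n then 4*n + v else v)
    (fun v => if v < n then (if h : ∃ b, BotP n b ∧ lk b = v then h.choose else 0)
      else (if (v - n) % 2 = 1 then v - 1 else v - 2))
  have key : ∀ x y, x ≠ y → R n lk x y →
      x = (if y < n then (if h : ∃ b, BotP n b ∧ lk b = y then h.choose else 0)
        else (if (y - n) % 2 = 1 then y - 1 else y - 2)) ∧
      (if x < n then 4*n + x else x) < (if y < n then 4*n + y else y) := by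
    intro x y _ hr
    rcases hr with ⟨i, hi, hx, hy⟩ | ⟨hb, hy⟩
    · have hxn : ¬ x < n := by omega
      have hyn : ¬ y < n := by omega
      rw [if_neg hxn, if_neg hyn, if_neg hyn]
      rcases hy with rfl | rfl
      · constructor
        · rw [if_pos (by omega)]; omega
        · omega
      · constructor
        · rw [if_neg (by omega)]; omega
        · omega
    · have hbb := botP_bounds hn hb
      have hyn : y < n := hy ▸ hg.1 x hb
      have hxn : ¬ x < n := by omega
      rw [if_pos hyn, if_neg hxn, if_pos hyn]
      have hex : ∃ b, BotP n b ∧ lk b = y := ⟨x, hb, hy.symm⟩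
      rw [dif_pos hex]
      constructor
      · exact (hg.2 hex.choose_spec.1 hb (hex.choose_spec.2.trans hy)).symm
      · omega
  intro x y hadj
  rw [adj_iff hn] at hadj
  obtain ⟨hne, hR | hR⟩ := hadj
  · exact Or.inr (key x y hne hR)
  · exact Or.inl (key y x hne.symm hR)

end MLL
namespace MLL

variable {n : ℕ} {lk : Linking} {σ : Switching}

lemma mem_S {x : ℕ} (hn : 2 ≤ n) :
    x ∈ {x : ℕ | x ∈ seqNames (onesTensBots n)} ↔ x < 3*n - 1 := by
  simp [seqNames_eq hn]

lemma good_connected (hn : 2 ≤ n) (hg : Good n lk) (σ : Switching) :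
    ((switchGraph (onesTensBots n) lk σ).induce
      {x : ℕ | x ∈ seqNames (onesTensBots n)}).Connected := by
  set S := {x : ℕ | x ∈ seqNames (onesTensBots n)} with hS
  set G := switchGraph (onesTensBots n) lk σ with hG
  have hmem : ∀ x, x < 3*n - 1 → x ∈ S := fun x hx => (mem_S hn).mpr hx
  set r : S := ⟨n, hmem n (by omega)⟩ with hr
  have hadj : ∀ x y (hx : x ∈ S) (hy : y ∈ S), R n lk x y → x ≠ y →
      (G.induce S).Adj ⟨x, hx⟩ ⟨y, hy⟩ := by
    intro x y hx hy hR hne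
    show G.Adj x y
    rw [hG, adj_iff hn]
    exact ⟨hne, Or.inl hR⟩
  have spine : ∀ v, n ≤ v → ∀ (hv : v ∈ S), (G.induce S).Reachable ⟨v, hv⟩ r := by
    intro v
    induction v using Nat.strong_induction_on with
    | _ v ih =>
      intro hnv hv
      have hv3 : v < 3*n - 1 := (mem_S hn).mp hv
      rcases Nat.eq_or_lt_of_le hnv with heq | hlt
      · have : (⟨v, hv⟩ : S) = r := Subtype.ext heq.symm
        rw [this]
      · by_cases hpar : (v - n) % 2 = 1
        · have hw : v - 1 ∈ S := hmem _ (by omega)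
          have ha : (G.induce S).Adj ⟨v-1, hw⟩ ⟨v, hv⟩ :=
            hadj _ _ _ _ (Or.inl ⟨(v - n - 1)/2, by omega, by omega, Or.inl (by omega)⟩)
              (by omega)
          exact ha.symm.reachable.trans (ih (v-1) (by omega) (by omega) hw)
        · have hw : v - 2 ∈ S := hmem _ (by omega)
          have ha : (G.induce S).Adj ⟨v-2, hw⟩ ⟨v, hv⟩ :=
            hadj _ _ _ _ (Or.inl ⟨(v - n - 2)/2, by omega, by omega, Or.inr (by omega)⟩)
              (by omega)
          exact ha.symm.reachable.trans (ih (v-2) (by omega) (by omega) hw)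
  have ones : ∀ j (hj : j < n) (hjS : j ∈ S), (G.induce S).Reachable ⟨j, hjS⟩ r := by
    intro j hj hjS
    obtain ⟨b, hb, hlkb⟩ := good_surj hn hg hj
    have hbb := botP_bounds hn hb
    have hbS : b ∈ S := hmem b (by omega)
    have ha : (G.induce S).Adj ⟨b, hbS⟩ ⟨j, hjS⟩ :=
      hadj _ _ _ _ (Or.inr ⟨hb, hlkb.symm⟩) (by omega)
    exact ha.symm.reachable.trans (spine b (by omega) hbS)
  rw [SimpleGraph.connected_iff]
  refine ⟨fun u v => ?_, ⟨r⟩⟩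
  have total : ∀ u : S, (G.induce S).Reachable u r := by
    rintro ⟨x, hx⟩
    by_cases hxn : x < n
    · exact ones x hxn hx
    · exact spine x (by omega) hx
  exact (total u).trans (total v).symm

lemma good_correct (hn : 2 ≤ n) (hg : Good n lk) : Correct (onesTensBots n) lk := by
  constructor
  · intro a ha
    rw [isBotName_iff hn] at ha
    rw [seqNames_eq hn, Finset.mem_range]
    have := hg.1 a ha; omega
  · intro σ
    exact ⟨good_connected hn hg σ, induce_acyclic (good_acyclic hn hg σ) _⟩

lemma correct_good (hn : 2 ≤ n) (hc : Correct (onesTensBots n) lk) : Good n lk := by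
  have htree := hc.2 (fun _ => false)
  have hconn := htree.isConnected
  set S := {x : ℕ | x ∈ seqNames (onesTensBots n)} with hS
  have hmem : ∀ x, x < 3*n - 1 → x ∈ S := fun x hx => (mem_S hn).mpr hx
  have surj : ∀ j, j < n → ∃ b, BotP n b ∧ lk b = j := by
    intro j hj
    have hjS : j ∈ S := hmem j (by omega)
    have hnS : n ∈ S := hmem n (by omega)
    obtain ⟨w⟩ := hconn ⟨j, hjS⟩ ⟨n, hnS⟩
    have hne : (⟨j, hjS⟩ : S) ≠ ⟨n, hnS⟩ := by
      intro h
      have := congrArg Subtype.val h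
      dsimp at this; omega
    have hnn : ¬ w.Nil := SimpleGraph.Walk.not_nil_of_ne hne
    set d := w.firstDart hnn with hd
    have hdadj := d.adj
    have hadj2 : (switchGraph (onesTensBots n) lk (fun _ => false)).Adj j d.snd.val :=
      hdadj
    rw [adj_iff hn] at hadj2
    obtain ⟨hne2, hR | hR⟩ := hadj2
    · exfalso
      rcases hR with ⟨i, hi, hx, hy⟩ | ⟨hb, hy⟩
      · omega
      · have := botP_bounds hn hb; omega
    · rcases hR with ⟨i, hi, hx, hy⟩ | ⟨hb, hy⟩
      · omega
      · exact ⟨d.snd.val, hb, hy.symm⟩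
  have hsub : Finset.range n ⊆ (BotFin n).image lk := by
    intro j hj
    obtain ⟨b, hb, rfl⟩ := surj j (Finset.mem_range.mp hj)
    exact Finset.mem_image_of_mem _ (mem_botFin.mpr hb)
  have hcard : ((BotFin n).image lk).card = n := le_antisymm
    (le_trans Finset.card_image_le (by rw [card_botFin hn]))
    (by calc n = (Finset.range n).card := (Finset.card_range n).symm
          _ ≤ _ := Finset.card_le_card hsub)
  have heq : (BotFin n).image lk = Finset.range n :=
    (Finset.eq_of_subset_of_card_le hsub (by rw [hcard, Finset.card_range])).symm
  constructor
  · intro b hb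
    have : lk b ∈ (BotFin n).image lk := Finset.mem_image_of_mem _ (mem_botFin.mpr hb)
    rw [heq, Finset.mem_range] at this
    exact this
  · intro a ha b hb
    exact Finset.injOn_of_card_image_eq (by rw [hcard, card_botFin hn])
      (Finset.mem_coe.mpr (mem_botFin.mpr ha)) (Finset.mem_coe.mpr (mem_botFin.mpr hb))

end MLL
namespace MLL

variable {n : ℕ} {lk : Linking}

/-- Enumeration of the `⊥`-names. -/
def bname (n : ℕ) (i : Fin n) : ℕ :=
  if (i : ℕ) < n - 1 then n + 2*(i : ℕ) + 1 else 3*n - 2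

/-- Inverse enumeration of the `⊥`-names. -/
def bidx (n b : ℕ) (hn : 2 ≤ n) : Fin n :=
  ⟨min (if b = 3*n - 2 then n - 1 else (b - n)/2) (n - 1), by omega⟩

lemma botP_bname (hn : 2 ≤ n) (i : Fin n) : BotP n (bname n i) := by
  unfold bname BotP
  split
  · exact Or.inl ⟨i, by omega, rfl⟩
  · exact Or.inr rfl

lemma bidx_val (n b : ℕ) (hn : 2 ≤ n) :
    ((bidx n b hn) : ℕ) = min (if b = 3*n - 2 then n - 1 else (b - n)/2) (n - 1) := rfl

lemma bname_bidx (hn : 2 ≤ n) {b : ℕ} (hb : BotP n b) : bname n (bidx n b hn) = b := by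
  unfold bname
  rw [bidx_val]
  rcases hb with ⟨i, hi, rfl⟩ | rfl <;> split_ifs <;> omega

lemma bidx_bname (hn : 2 ≤ n) (i : Fin n) : bidx n (bname n i) hn = i := by
  have hi := i.isLt
  apply Fin.ext
  rw [bidx_val]
  unfold bname
  split_ifs <;> omega

lemma noRewire (hn : 2 ≤ n) (lk lk' : Linking) : ¬ Rewire (onesTensBots n) lk lk' := by
  rintro ⟨hc, hc', a, ha, hne, hrest⟩
  have hg := correct_good hn hc
  have hg' := correct_good hn hc'
  have ha' : BotP n a := (isBotName_iff hn).mp ha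
  obtain ⟨b, hb, hbeq⟩ := good_surj hn hg (hg'.1 a ha')
  have hba : b ≠ a := by
    intro h; subst h; exact hne hbeq
  have h1 : lk' b = lk' a := by
    rw [← hrest b ((isBotName_iff hn).mpr hb) hba, hbeq]
  exact hba (hg'.2 hb ha' h1)

end MLL

open MLL in
/-- For `n ≥ 2`, the sequent `1^n, ⊗(⊥^n)` is inhabited by
exactly `n!` proof nets (with jumps targeting `1`-occurrences; linkings are
normalised to `0` outside the `⊥`-names so that they correspond bijectively to
proof nets), these nets are pairwise inequivalent, and no rewiring step is
possible from any of them. -/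
theorem mll_ones_tens_bots_factorial (n : ℕ) (hn : 2 ≤ n) :
    {lk : Linking | Correct (onesTensBots n) lk ∧ TargetsOnes (onesTensBots n) lk ∧
        ∀ a, ¬ IsBotName (onesTensBots n) a → lk a = 0}.ncard = n.factorial ∧
    (∀ lk lk' : Linking, ¬ Rewire (onesTensBots n) lk lk') ∧
    (∀ lk lk' : Linking, Correct (onesTensBots n) lk → Correct (onesTensBots n) lk' →
      NetEquiv (onesTensBots n) lk lk' → SameNet (onesTensBots n) lk lk') := by
  refine ⟨?_, fun lk lk' => noRewire hn lk lk', ?_⟩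
  · -- counting
    have hSet : {lk : Linking | Correct (onesTensBots n) lk ∧ TargetsOnes (onesTensBots n) lk ∧
        ∀ a, ¬ IsBotName (onesTensBots n) a → lk a = 0} =
        {lk : Linking | Good n lk ∧ ∀ a, ¬ BotP n a → lk a = 0} := by
      ext lk
      simp only [Set.mem_setOf_eq]
      constructor
      · rintro ⟨hc, _, hnorm⟩
        exact ⟨correct_good hn hc, fun a ha => hnorm a (fun h => ha ((isBotName_iff hn).mp h))⟩
      · rintro ⟨hg, hnorm⟩
        refine ⟨good_correct hn hg, ?_, ?_⟩
        · intro a ha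
          exact (isOneName_iff hn).mpr (hg.1 a ((isBotName_iff hn).mp ha))
        · intro a ha
          exact hnorm a (fun h => ha ((isBotName_iff hn).mpr h))
    rw [hSet]
    have E : {lk : Linking | Good n lk ∧ ∀ a, ¬ BotP n a → lk a = 0} ≃ (Fin n ↪ Fin n) := by
      refine ⟨fun p => ⟨fun i => ⟨p.1 (bname n i), p.2.1.1 _ (botP_bname hn i)⟩, ?_⟩,
        fun g => ⟨fun b => if h : BotP n b then (g (bidx n b hn) : ℕ) else 0, ?_, ?_⟩,
        ?_, ?_⟩
      · intro i j hij
        have h1 : p.1 (bname n i) = p.1 (bname n j) := congrArg Fin.val hij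
        have h2 := p.2.1.2 (botP_bname hn i) (botP_bname hn j) h1
        have h3 := congrArg (fun b => bidx n b hn) h2
        simpa [bidx_bname hn] using h3
      · constructor
        · intro b hb
          dsimp only
          rw [dif_pos hb]
          exact (g (bidx n b hn)).isLt
        · intro a ha b hb h
          simp only [Set.mem_setOf_eq] at ha hb
          dsimp only at h
          rw [dif_pos ha, dif_pos hb] at h
          have := g.injective (Fin.val_injective h)
          calc a = bname n (bidx n a hn) := (bname_bidx hn ha).symm
            _ = bname n (bidx n b hn) := by rw [this]
            _ = b := bname_bidx hn hb
      · intro a ha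
        exact dif_neg ha
      · rintro ⟨lk, hg, hnorm⟩
        apply Subtype.ext
        funext b
        simp only
        by_cases hb : BotP n b
        · rw [dif_pos hb]
          show lk (bname n (bidx n b hn)) = lk b
          rw [bname_bidx hn hb]
        · rw [dif_neg hb, hnorm b hb]
      · intro g
        apply DFunLike.ext
        intro i
        apply Fin.ext
        show (if h : BotP n (bname n i) then ((g (bidx n (bname n i) hn)) : ℕ) else 0) = (g i : ℕ)
        rw [dif_pos (botP_bname hn i), bidx_bname hn i]
    calc {lk : Linking | Good n lk ∧ ∀ a, ¬ BotP n a → lk a = 0}.ncard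
        = Nat.card {lk : Linking | Good n lk ∧ ∀ a, ¬ BotP n a → lk a = 0} :=
          (Nat.card_coe_set_eq _).symm
      _ = Nat.card (Fin n ↪ Fin n) := Nat.card_congr E
      _ = Fintype.card (Fin n ↪ Fin n) := Nat.card_eq_fintype_card
      _ = (Fintype.card (Fin n)).descFactorial (Fintype.card (Fin n)) :=
          Fintype.card_embedding_eq
      _ = n.descFactorial n := by rw [Fintype.card_fin]
      _ = n.factorial := Nat.descFactorial_self n
  · -- equivalence collapses
    intro lk lk' hc hc' heq
    have key : ∀ x y : Linking, NetEquiv (onesTensBots n) x y →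
        x = y ∨ SameNet (onesTensBots n) x y := by
      intro x y h
      induction h with
      | rel a b hab =>
        rcases hab with hs | hr
        · exact Or.inr hs
        · exact absurd hr (noRewire hn a b)
      | refl a => exact Or.inl rfl
      | symm a b _ ih =>
        rcases ih with rfl | hs
        · exact Or.inl rfl
        · exact Or.inr ⟨hs.2.1, hs.1, fun c hc => (hs.2.2 c hc).symm⟩
      | trans a b c _ _ ih1 ih2 =>
        rcases ih1 with rfl | hs1
        · exact ih2
        · rcases ih2 with rfl | hs2
          · exact Or.inr hs1
          · exact Or.inr ⟨hs1.1, hs2.2.1, fun d hd => (hs1.2.2 d hd).trans (hs2.2.2 d hd)⟩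
    rcases key lk lk' heq with rfl | hs
    · exact ⟨hc, hc', fun a _ => rfl⟩
    · exact hs
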